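/- Let $k=\mathbb{F}_{2^m}$ with $m$ odd. The number of $a\in k^*$ for which $x^5+x+a^{-1}$ has exactly one root in $k$ and its quartic cofactor is irreducible over $k$ equals $(q/2)-1$, where $q=2^m$. -/

import Mathlib

open Polynomial

set_option linter.unusedSectionVars false
set_option linter.unusedVariables false
set_option maxHeartbeats 1000000

namespace Stmt18

section
variable {k : Type*} [Field k] [CharP k 2]

lemma two_zero : (2:k) = 0 := by
  have := CharP.cast_eq_zero k 2; exact_mod_cast this

lemma coprime3 {m : ℕ} (hm : Odd m) : ¬ (3 ∣ 2^m - 1) := by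
  obtain ⟨j, rfl⟩ := hm
  intro h
  have h1 : 2^(2*j+1) % 3 = 2 := by
    have he : 2^(2*j+1) = 2 * 4^j := by rw [pow_succ, pow_mul]; ring
    rw [he, Nat.mul_mod, Nat.pow_mod]
    simp
  have h2 : 1 ≤ 2^(2*j+1) := Nat.one_le_two_pow
  generalize hn : 2^(2*j+1) = n at h1 h2 h
  omega

/-- Artin–Schreier membership: `x` is of the form `y² + y`. -/
def IsAS (x : k) : Prop := ∃ y : k, y^2 + y = x

variable [Fintype k] {m : ℕ} (hm : Odd m) (hq : Fintype.card k = 2 ^ m)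

include hm hq in
lemma cube_inj : Function.Injective (fun x : k => x^3) := by
  intro x y hxy
  simp only at hxy
  rcases eq_or_ne y 0 with rfl | hy
  · simpa [pow_eq_zero_iff] using hxy
  rcases eq_or_ne x 0 with rfl | hx
  · exfalso; apply hy; have : y^3 = 0 := by linear_combination -hxy
    simpa [pow_eq_zero_iff] using this
  have hu3 : (x/y)^3 = 1 := by field_simp; linear_combination hxy
  have hord : orderOf (x/y) ∣ 3 := orderOf_dvd_of_pow_eq_one hu3
  have hu0 : x/y ≠ 0 := div_ne_zero hx hy
  have hord2 : orderOf (x/y) ∣ Fintype.card k - 1 :=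
    orderOf_dvd_of_pow_eq_one (FiniteField.pow_card_sub_one_eq_one _ hu0)
  have : orderOf (x/y) = 1 := by
    rcases (Nat.dvd_prime Nat.prime_three).mp hord with h | h
    · exact h
    · exfalso; apply coprime3 hm; rw [← hq]; rw [h] at hord2; exact hord2
  have : x/y = 1 := orderOf_eq_one_iff.mp this
  field_simp at this; exact this

include hm hq in
lemma cube_surj : Function.Surjective (fun x : k => x^3) :=
  Finite.surjective_of_injective (cube_inj hm hq)

lemma sq_inj : Function.Injective (fun x : k => x^2) := by
  intro x y h
  simp only at h
  have h2 : (x+y)^2 = 0 := by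
    linear_combination h + (x*y + y^2) * (two_zero (k:=k))
  have h3 : x + y = 0 := pow_eq_zero_iff (n := 2) (by norm_num) |>.mp h2
  linear_combination h3 - y * (two_zero (k:=k))

lemma sq_surj : Function.Surjective (fun x : k => x^2) :=
  Finite.surjective_of_injective sq_inj

lemma isAS_sq {x : k} : IsAS (x^2) ↔ IsAS x := by
  constructor
  · rintro ⟨y, hy⟩
    obtain ⟨w, hw⟩ := sq_surj y
    refine ⟨w, sq_inj ?_⟩
    simp only
    simp only at hw
    linear_combination hy + (w^2 + y + 1) * hw + w^3 * (two_zero (k:=k))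
  · rintro ⟨y, hy⟩
    exact ⟨y^2, by linear_combination (y^2+y+x)*hy - y^3*(two_zero (k:=k))⟩

include hm hq in
lemma one_not_AS : ¬ IsAS (1 : k) := by
  rintro ⟨y, hy⟩
  have h3 : y^3 = 1^3 := by
    linear_combination (y+1)*hy - y^2*(two_zero (k:=k))
  have := cube_inj hm hq h3
  rw [this] at hy
  have : (1:k) = 0 := by linear_combination hy
  simp at this

end

section count
variable {k : Type*} [Field k] [Fintype k] [CharP k 2]

def asHom (k : Type*) [Field k] [CharP k 2] : k →+ k :=
  AddMonoidHom.mk' (fun x => x^2 + x) (by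
    intro a b
    linear_combination a*b*(two_zero (k:=k)))

lemma ker_asHom : ((asHom k).ker : Set k) = {0, 1} := by
  ext x
  simp only [AddMonoidHom.mem_ker, asHom, AddMonoidHom.mk'_apply, Set.mem_insert_iff,
    Set.mem_singleton_iff, SetLike.mem_coe]
  constructor
  · intro h
    have : x * (x + 1) = 0 := by linear_combination h
    rcases mul_eq_zero.mp this with h | h
    · exact Or.inl h
    · right; linear_combination h - (two_zero (k:=k))
  · rintro (rfl | rfl)
    · ring
    · linear_combination (two_zero (k:=k))

variable {m : ℕ} (hm : Odd m) (hq : Fintype.card k = 2 ^ m)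

include hq in
lemma card_range_asHom : Nat.card (Set.range (fun x : k => x^2 + x)) = 2^(m-1) := by
  have h2 : Nat.card k = Nat.card (k ⧸ (asHom k).ker) * Nat.card ((asHom k).ker) :=
    AddSubgroup.card_eq_card_quotient_mul_card_addSubgroup _
  have hker : Nat.card ((asHom k).ker) = 2 := by
    have hsets : ((asHom k).ker : Set k) = {0,1} := ker_asHom
    have h1 : Nat.card ((asHom k).ker) = Nat.card ({0,1} : Set k) :=
      Nat.card_congr (Equiv.setCongr hsets)
    rw [h1, Nat.card_coe_set_eq, Set.ncard_pair (zero_ne_one (α := k))]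
  have hquot : Nat.card (k ⧸ (asHom k).ker) = Nat.card (Set.range (fun x : k => x^2+x)) := by
    have e := QuotientAddGroup.quotientKerEquivRange (asHom k)
    have : ((asHom k).range : Set k) = Set.range (fun x : k => x^2+x) := by
      ext x; simp [asHom, AddMonoidHom.mem_range]
    exact Nat.card_congr (e.toEquiv.trans (Equiv.setCongr this))
  have hcard : Nat.card k = 2^m := by rw [Nat.card_eq_fintype_card, hq]
  rw [hcard, hquot, hker] at h2
  have hm1 : 1 ≤ m := by
    rcases Nat.eq_zero_or_pos m with h | h
    · exfalso; rw [h] at hcard; simp at hcard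
      have := Fintype.one_lt_card_iff_nontrivial (α := k) |>.mpr inferInstance
      omega
    · omega
  have : 2^m = 2^(m-1) * 2 := by
    rw [← pow_succ]; congr 1; omega
  omega

include hm hq in
lemma card_T : Nat.card {x : k | ¬ IsAS x ∧ x ≠ 1} = 2^(m-1) - 1 := by
  have hrange := card_range_asHom (k := k) (m := m) hq
  have hone := one_not_AS hm hq
  have hset : {x : k | ¬ IsAS x ∧ x ≠ 1}
      = ((Set.range (fun x : k => x^2 + x))ᶜ) \ {1} := by
    ext x
    simp only [Set.mem_setOf_eq, Set.mem_diff, Set.mem_compl_iff, Set.mem_range,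
      Set.mem_singleton_iff]
    exact and_congr (by rw [iff_comm]; exact not_congr Iff.rfl) Iff.rfl
  have hcompl : ((Set.range (fun x : k => x^2 + x))ᶜ).ncard = 2^(m-1) := by
    have := Set.ncard_add_ncard_compl (Set.range (fun x : k => x^2 + x))
    rw [Nat.card_coe_set_eq] at hrange
    rw [hrange] at this
    have hcard : Nat.card k = 2^m := by rw [Nat.card_eq_fintype_card, hq]
    rw [hcard] at this
    have hm1 : 1 ≤ m := hm.pos
    have h2 : (2:ℕ)^m = 2^(m-1) * 2 := by rw [← pow_succ]; congr 1; omega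
    omega
  have hmem : (1:k) ∈ (Set.range (fun x : k => x^2 + x))ᶜ := by
    simp only [Set.mem_compl_iff, Set.mem_range]
    intro ⟨y, hy⟩
    exact hone ⟨y, hy⟩
  rw [Nat.card_coe_set_eq, hset, Set.ncard_diff_singleton_of_mem hmem, hcompl]
end count

section poly
variable {k : Type*} [Field k] [CharP k 2]

/-- the quartic cofactor of `X + C z` in `X^5 + X + C (z^5+z)` -/
noncomputable def gzz (z : k) : k[X] :=
  X^4 + C z * X^3 + C (z^2) * X^2 + C (z^3) * X + C (z^4+1)

lemma htwoPoly : (2 : k[X]) = 0 := by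
  rw [show ((2:k[X])) = C (2:k) from (map_ofNat C 2).symm, two_zero, map_zero]

lemma gzz_mul (z : k) : (X + C z) * gzz z = X^5 + X + C (z^5 + z) := by
  unfold gzz
  simp only [map_add, map_pow, map_one]
  linear_combination (C z * X^4 + C z^2 * X^3 + C z^3 * X^2 + C z^4 * X) * (htwoPoly (k:=k))

lemma gzz_monic (z : k) : (gzz z).Monic := by unfold gzz; monicity!
lemma gzz_natDegree (z : k) : (gzz z).natDegree = 4 := by unfold gzz; compute_degree!
lemma gzz_degree (z : k) : (gzz z).degree = 4 := by unfold gzz; compute_degree!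

lemma gz_factor {z y : k} (hk : z^4*(y^2+y)^3 = z^4+1) :
    gzz z = (X^2 + C (z*y) * X + C (z^2*(1+y+y^2+y^3)))
        * (X^2 + C (z+z*y) * X + C (z^2*y^3)) := by
  have hkC : (C z)^4*((C y)^2+(C y))^3 = (C z)^4 + 1 := by
    have := congrArg (C : k →+* k[X]) hk
    simpa only [map_add, map_mul, map_pow, map_one] using this
  unfold gzz
  simp only [map_add, map_mul, map_pow, map_one]
  linear_combination (-1 : k[X]) * hkC +
    (- C y*C z*X^3 - C y*(C z)^2*X^2 - C y*(C z)^3*X - (C y)^2*(C z)^2*X^2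
     - (C y)^2*(C z)^3*X - (C y)^3*(C z)^2*X^2 - (C y)^3*(C z)^3*X
     - (C y)^4*(C z)^3*X + (C y)^4*(C z)^4 + (C y)^5*(C z)^4) * (htwoPoly (k:=k))

lemma monic_quad_eq {p : k[X]} (hp : p.Monic) (h2 : p.natDegree = 2) :
    p = X^2 + C (p.coeff 1) * X + C (p.coeff 0) := by
  ext n
  rcases n with _|_|_|n
  · simp
  · simp [coeff_X, coeff_X_pow]
  · have : p.coeff 2 = 1 := by
      have := hp.coeff_natDegree; rwa [h2] at this
    simp [coeff_X_pow, this]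
  · have : p.coeff (n+3) = 0 := coeff_eq_zero_of_natDegree_lt (by omega)
    simp [coeff_X_pow, this]

lemma quartic_coeff_eq {c3 c2 c1 c0 d3 d2 d1 d0 : k}
    (h : X^4 + C c3*X^3 + C c2*X^2 + C c1*X + C c0
       = X^4 + C d3*X^3 + C d2*X^2 + C d1*X + C d0) :
    c3 = d3 ∧ c2 = d2 ∧ c1 = d1 ∧ c0 = d0 := by
  refine ⟨?_, ?_, ?_, ?_⟩
  · have := congrArg (fun p => coeff p 3) h
    simpa using this
  · have := congrArg (fun p => coeff p 2) h
    simpa using this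
  · have := congrArg (fun p => coeff p 1) h
    simpa using this
  · have := congrArg (fun p => coeff p 0) h
    simpa using this

lemma quad_case {z l a0 a1 b0 b1 : k}
    (hcube : ∀ x y : k, x^3 = y^3 → x = y)
    (hlam : l^3 * z^4 = z^4 + 1) (hz : z ≠ 0)
    (e3 : a1 + b1 = z) (e2 : a0 + b0 + a1*b1 = z^2)
    (e1 : a1*b0 + b1*a0 = z^3) (e0 : a0*b0 = z^4+1) :
    ∃ y : k, y^2 + y = l := by
  have hb1 : b1 = z - a1 := by linear_combination e3
  subst hb1
  have hb0 : b0 = z^2 - a0 - a1*(z-a1) := by linear_combination e2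
  subst hb0
  have ha0 : z*a0 = z^3 - a1*z^2 + a1^2*z - a1^3 + 2*(a1*a0) := by
    linear_combination e1
  have hG : (z^3 - a1*z^2 + a1^2*z - a1^3 + 2*(a1*a0))*(a1^3 - 2*(a1*a0))
      = z^6 + z^2 := by
    have he0' : (z*a0) * (z^3 - z*a0 - a1*z^2 + a1^2*z) = z^6 + z^2 := by
      linear_combination z^2*e0
    linear_combination he0' + (z*a0 - a1^3 + 2*(a1*a0)) * ha0
  have gcube : (a1*z + a1^2)^3 = (z^2*l)^3 := by
    linear_combination hG - z^2*hlam +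
      (a1^3*(2*a1*z^2+a1^2*z+a1^3-a1*a0) +
        a1*a0*(z^3-a1*z^2+a1^2*z-a1^3+2*(a1*a0))) * (two_zero (k:=k))
  have hf : a1*z + a1^2 = z^2*l := hcube _ _ gcube
  refine ⟨a1/z, ?_⟩
  field_simp
  linear_combination hf

lemma root_case {z l α : k} (hαz : α + z ≠ 0)
    (hlam : l^3 * z^4 = z^4 + 1)
    (E : α^4 + z*α^3 + z^2*α^2 + z^3*α + z^4 + 1 = 0) :
    ∃ y : k, y^2 + y = l^4 := by
  have hE' : α^4 + z*α^3 + z^2*α^2 + z^3*α = z^4 + 1 := by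
    linear_combination E - (z^4+1) * (two_zero (k:=k))
  have hKF : l^4*α^4 + l*α*(α+z)^3 = l^4*(α+z)^4 := by
    linear_combination l*hE' - l*hlam +
      (l*α^3*z + l*α^2*z^2 - 2*l^4*α^3*z - 3*l^4*α^2*z^2 - 2*l^4*α*z^3) * (two_zero (k:=k))
  set w : k := α / (α + z) with hw
  have key2 : (l*w)^4 + (l*w) = l^4 := by
    rw [hw]
    field_simp
    linear_combination hKF
  exact ⟨(l*w)^2 + l*w, by linear_combination key2 + ((l*w)^3+(l*w)^2) * (two_zero (k:=k))⟩

/-- quartic over an irreducible has no roots -/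
lemma no_root_of_irred {p : k[X]} (hp : Irreducible p) (hd : p.natDegree = 4) (α : k) :
    p.eval α ≠ 0 := by
  intro h
  have hdvd : (X - C α) ∣ p := dvd_iff_isRoot.mpr h
  obtain ⟨u, hu⟩ := hdvd
  rcases hp.isUnit_or_isUnit hu with h1 | h2
  · have := natDegree_eq_zero_of_isUnit h1
    rw [natDegree_X_sub_C] at this
    omega
  · have hu0 : u ≠ 0 := by
      intro h0; rw [h0, mul_zero] at hu
      rw [hu] at hd; simp at hd
    have := natDegree_eq_zero_of_isUnit h2
    have hXC : (X - C α : k[X]) ≠ 0 := X_sub_C_ne_zero α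
    have hmul := natDegree_mul hXC hu0
    rw [← hu, natDegree_X_sub_C, this, hd] at hmul
    omega

variable [Fintype k] {m : ℕ} (hm : Odd m) (hq : Fintype.card k = 2 ^ m)

include hm hq in
/-- Core: irreducibility of the quartic cofactor is equivalent to λ not being
in the Artin-Schreier range. -/
lemma gzz_irred_iff {z l : k} (hz0 : z ≠ 0) (hz1 : z ≠ 1)
    (hlam : l^3*z^4 = z^4+1) :
    Irreducible (gzz z) ↔ ¬ IsAS l := by
  constructor
  · intro hIrr hAS
    obtain ⟨y, hy⟩ := hAS
    have hk : z^4*(y^2+y)^3 = z^4+1 := by rw [hy]; linear_combination hlam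
    have hfac := gz_factor hk
    rcases hIrr.isUnit_or_isUnit hfac with h | h
    · have := natDegree_eq_zero_of_isUnit h
      have h2 : (X^2 + C (z*y) * X + C (z^2*(1+y+y^2+y^3)) : k[X]).natDegree = 2 := by
        compute_degree!
      omega
    · have := natDegree_eq_zero_of_isUnit h
      have h2 : (X^2 + C (z+z*y) * X + C (z^2*y^3) : k[X]).natDegree = 2 := by
        compute_degree!
      omega
  · intro hnAS
    by_contra hni
    apply hnAS
    rw [(gzz_monic z).irreducible_iff_natDegree'] at hni
    push_neg at hni
    have hne1 : gzz z ≠ 1 := fun h => by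
      have := congrArg natDegree h; rw [gzz_natDegree] at this; simp at this
    obtain ⟨f, g, hf, hg, hfg, hmem⟩ := hni hne1
    rw [gzz_natDegree] at hmem
    norm_num at hmem
    obtain ⟨hg0, hg2⟩ := hmem
    interval_cases hgd : g.natDegree
    · -- degree-1 factor: root in k
      have hgeq := hg.eq_X_add_C hgd
      set α := g.coeff 0 with hα
      have heval : (gzz z).eval α = 0 := by
        rw [← hfg, eval_mul, hgeq]
        simp only [eval_add, eval_X, eval_C]
        have : α + α = 0 := by linear_combination α * (two_zero (k:=k))
        rw [this, mul_zero]
      have E : α^4 + z*α^3 + z^2*α^2 + z^3*α + z^4 + 1 = 0 := by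
        simp only [gzz, eval_add, eval_mul, eval_pow, eval_X, eval_C] at heval
        linear_combination heval
      have hαz : α + z ≠ 0 := by
        intro h
        have hαez : α = z := by linear_combination h - z*(two_zero (k:=k))
        rw [hαez] at E
        have h41 : (z+1)^4 = 0 := by
          linear_combination E + (-2*z^4+2*z^3+3*z^2+2*z)*(two_zero (k:=k))
        have : z + 1 = 0 := pow_eq_zero_iff (n := 4) (by norm_num) |>.mp h41
        exact hz1 (by linear_combination this - (two_zero (k:=k)))
      obtain ⟨y, hy⟩ := root_case hαz hlam E
      have h4 : IsAS (((l^2)^2 : k)) := ⟨y, by rw [hy]; ring⟩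
      rw [isAS_sq, isAS_sq] at h4
      exact h4
    · -- degree-2 factor
      have hfd : f.natDegree = 2 := by
        have := hf.natDegree_mul hg
        rw [hfg, gzz_natDegree, hgd] at this
        omega
      have hfeq := monic_quad_eq hf hfd
      have hgeq := monic_quad_eq hg hgd
      rw [hfeq, hgeq] at hfg
      set a1 := f.coeff 1; set a0 := f.coeff 0; set b1 := g.coeff 1; set b0 := g.coeff 0
      have hexp : (X^2 + C a1*X + C a0)*(X^2 + C b1*X + C b0)
          = X^4 + C (a1+b1)*X^3 + C (a0+b0+a1*b1)*X^2 + C (a1*b0+b1*a0)*X + C (a0*b0) := by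
        simp only [map_add, map_mul]; ring
      rw [hexp] at hfg
      unfold gzz at hfg
      obtain ⟨e3, e2, e1, e0⟩ := quartic_coeff_eq hfg
      exact quad_case (fun x y h => cube_inj hm hq h) hlam hz0 e3 e2 e1 e0

end poly

section mainmap
variable {k : Type*} [Field k] [Fintype k] [CharP k 2]

noncomputable def sqrtFn (k : Type*) [Field k] [Fintype k] [CharP k 2] : k → k :=
  Function.surjInv (sq_surj (k := k))

lemma sqrtFn_sq (x : k) : (sqrtFn k x)^2 = x :=
  Function.surjInv_eq (sq_surj (k := k)) x

noncomputable def wOf (l : k) : k := sqrtFn k (sqrtFn k (l^3))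

lemma wOf_pow (l : k) : (wOf l)^4 = l^3 := by
  have h1 : (wOf l)^2 = sqrtFn k (l^3) := sqrtFn_sq _
  calc (wOf l)^4 = ((wOf l)^2)^2 := by ring
  _ = (sqrtFn k (l^3))^2 := by rw [h1]
  _ = l^3 := sqrtFn_sq _

noncomputable def zOf (l : k) : k := (wOf l + 1)⁻¹

noncomputable def aOf (l : k) : k := ((zOf l)^5 + zOf l)⁻¹

end mainmap

section final
variable {k : Type*} [Field k] [Fintype k] [CharP k 2]
variable {m : ℕ} (hm : Odd m) (hq : Fintype.card k = 2 ^ m)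

lemma pow4_inj {x y : k} (h : x^4 = y^4) : x = y := by
  have h2 : (x^2)^2 = (y^2)^2 := by ring_nf; ring_nf at h; exact h
  exact sq_inj (sq_inj h2)

include hm hq in
lemma aOf_spec {l : k} (hl : ¬ IsAS l) (hl1 : l ≠ 1) :
    aOf l ≠ 0 ∧ zOf l ≠ 0 ∧ zOf l ≠ 1 ∧ l^3*(zOf l)^4 = (zOf l)^4+1 ∧
    (aOf l)⁻¹ = (zOf l)^5 + zOf l ∧ Irreducible (gzz (zOf l)) ∧
    (X^5+X+C (aOf l)⁻¹ : k[X]) = (X + C (zOf l)) * gzz (zOf l) := by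
  have hl0 : l ≠ 0 := fun h => hl ⟨0, by rw [h]; ring⟩
  set w := wOf l with hwdef
  have hw4 : w^4 = l^3 := wOf_pow l
  have hw1 : w ≠ 1 := by
    intro h
    apply hl1
    apply cube_inj hm hq
    show l^3 = 1^3
    rw [← hw4, h]; ring
  have hw0 : w ≠ 0 := by
    intro h
    apply hl0
    have : l^3 = 0 := by rw [← hw4, h]; ring
    exact pow_eq_zero_iff (n := 3) (by norm_num) |>.mp this
  have hwz : w + 1 ≠ 0 := by
    intro h
    exact hw1 (by linear_combination h - (two_zero (k:=k)))
  set z := zOf l with hzdef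
  have hz0 : z ≠ 0 := inv_ne_zero hwz
  have hzinv : z⁻¹ = w + 1 := by rw [hzdef, zOf, inv_inv]
  have hz1 : z ≠ 1 := by
    intro h
    apply hw0
    have : z⁻¹ = 1 := by rw [h]; simp
    rw [hzinv] at this
    linear_combination this
  have h4 : (w+1)^4 = w^4+1 := by
    linear_combination (2*w^3+3*w^2+2*w)*(two_zero (k:=k))
  have h5 : (z^4)⁻¹ = l^3+1 := by
    rw [← inv_pow, hzinv, h4, hw4]
  have hlam : l^3*z^4 = z^4+1 := by
    have h6 : (1:k) = (l^3+1) * z^4 := by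
      rw [← h5]; field_simp
    linear_combination -h6 - z^4*(two_zero (k:=k))
  have hzp1 : z + 1 ≠ 0 := by
    intro h
    exact hz1 (by linear_combination h - (two_zero (k:=k)))
  have hz5 : z^5 + z ≠ 0 := by
    have hfac : z^5+z = z*(z+1)^4 := by
      linear_combination (-2*z^4-3*z^3-2*z^2)*(two_zero (k:=k))
    rw [hfac]
    exact mul_ne_zero hz0 (pow_ne_zero 4 hzp1)
  have ha0 : aOf l ≠ 0 := by rw [aOf]; exact inv_ne_zero hz5
  have hainv : (aOf l)⁻¹ = z^5 + z := by rw [aOf, inv_inv]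
  have hirr : Irreducible (gzz z) := (gzz_irred_iff hm hq hz0 hz1 hlam).mpr hl
  refine ⟨ha0, hz0, hz1, hlam, hainv, hirr, ?_⟩
  rw [hainv, ← gzz_mul]

include hm hq in
lemma aOf_inj {l1 l2 : k} (h1 : ¬ IsAS l1 ∧ l1 ≠ 1) (h2 : ¬ IsAS l2 ∧ l2 ≠ 1)
    (he : aOf l1 = aOf l2) : l1 = l2 := by
  obtain ⟨ha1, hz01, hz11, hlam1, hainv1, hirr1, hfac1⟩ := aOf_spec hm hq h1.1 h1.2
  obtain ⟨ha2, hz02, hz12, hlam2, hainv2, hirr2, hfac2⟩ := aOf_spec hm hq h2.1 h2.2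
  have hzz : (zOf l1)^5 + zOf l1 = (zOf l2)^5 + zOf l2 := by
    rw [← hainv1, ← hainv2, he]
  have hz : zOf l1 = zOf l2 := by
    by_contra hne
    have hd : zOf l2 + zOf l1 ≠ 0 := by
      intro h
      apply hne
      linear_combination -h + (zOf l1)*(two_zero (k:=k))
    have := congrArg (eval (zOf l2)) (gzz_mul (zOf l1))
    simp only [eval_mul, eval_add, eval_pow, eval_X, eval_C] at this
    have hzero : (zOf l2 + zOf l1) * (gzz (zOf l1)).eval (zOf l2) = 0 := by
      rw [this]
      linear_combination hzz + ((zOf l2)^5 + zOf l2)*(two_zero (k:=k))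
    rcases mul_eq_zero.mp hzero with h | h
    · exact hd h
    · exact no_root_of_irred hirr1 (gzz_natDegree _) _ h
  -- recover w then l
  have hw : wOf l1 = wOf l2 := by
    have e1 : (zOf l1)⁻¹ = wOf l1 + 1 := by rw [zOf, inv_inv]
    have e2 : (zOf l2)⁻¹ = wOf l2 + 1 := by rw [zOf, inv_inv]
    have : wOf l1 + 1 = wOf l2 + 1 := by rw [← e1, ← e2, hz]
    linear_combination this
  apply cube_inj hm hq
  show l1^3 = l2^3
  rw [← wOf_pow l1, ← wOf_pow l2, hw]

include hm hq in
lemma aOf_surj {a : k} (ha : a ≠ 0)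
    (hex : ∃ z : k, ∃ g : k[X], g.Monic ∧ g.degree = 4 ∧ Irreducible g ∧
      (X ^ 5 + X + C a⁻¹ : k[X]) = (X + C z) * g) :
    ∃ l : k, (¬ IsAS l ∧ l ≠ 1) ∧ aOf l = a := by
  obtain ⟨z, g, hmon, hdeg, hirr, hfac⟩ := hex
  have heval := congrArg (eval z) hfac
  simp only [eval_mul, eval_add, eval_pow, eval_X, eval_C] at heval
  have hzz0 : z + z = 0 := by linear_combination z*(two_zero (k:=k))
  rw [hzz0, zero_mul] at heval
  have hainv : a⁻¹ = z^5 + z := by linear_combination heval - (z^5+z)*(two_zero (k:=k))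
  have hz5 : z^5 + z ≠ 0 := by rw [← hainv]; exact inv_ne_zero ha
  have hz0 : z ≠ 0 := by
    intro h; apply hz5; rw [h]; ring
  have hz1 : z ≠ 1 := by
    intro h; apply hz5; rw [h]
    linear_combination (two_zero (k:=k))
  have hgz : g = gzz z := by
    have h1 : (X + C z) * g = (X + C z) * gzz z := by
      rw [← hfac, gzz_mul, hainv]
    exact mul_left_cancel₀ (Monic.ne_zero (monic_X_add_C z)) h1
  obtain ⟨l, hl3⟩ := cube_surj hm hq ((z^4+1)/z^4)
  simp only at hl3
  have hlam : l^3*z^4 = z^4+1 := by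
    field_simp at hl3
    linear_combination hl3
  have hnAS : ¬ IsAS l := by
    refine (gzz_irred_iff hm hq hz0 hz1 hlam).mp ?_
    rwa [hgz] at hirr
  have hl1 : l ≠ 1 := by
    intro h
    rw [h] at hlam
    have : (1:k) = 0 := by linear_combination -hlam
    simp at this
  refine ⟨l, ⟨hnAS, hl1⟩, ?_⟩
  have hw4 : (wOf l)^4 = (z⁻¹+1)^4 := by
    rw [wOf_pow]
    have h4 : (z⁻¹+1)^4 = (z⁻¹)^4+1 := by
      linear_combination (2*(z⁻¹)^3+3*(z⁻¹)^2+2*z⁻¹)*(two_zero (k:=k))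
    rw [h4, inv_pow]
    field_simp
    linear_combination hlam
  have hw : wOf l = z⁻¹ + 1 := pow4_inj hw4
  have hzeq : zOf l = z := by
    rw [zOf, hw]
    have : z⁻¹ + 1 + 1 = z⁻¹ := by linear_combination (two_zero (k:=k))
    rw [this, inv_inv]
  rw [aOf, hzeq, ← hainv, inv_inv]

end final

end Stmt18

open Stmt18 in
/-- For `m` odd, the number of `a ∈ k*` for which `x⁵ + x + a⁻¹` factors over `k`
as (one linear factor)·(irreducible quartic) — i.e. has exactly one root in `k`
with irreducible quartic cofactor — equals `q/2 - 1` where `q = 2^m`. -/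
theorem stmt_18 (k : Type*) [Field k] [Fintype k] [CharP k 2]
    (m : ℕ) (hm : Odd m) (hq : Fintype.card k = 2 ^ m) :
    Nat.card {a : k | a ≠ 0 ∧ ∃ z : k, ∃ g : k[X], g.Monic ∧ g.degree = 4 ∧
        Irreducible g ∧ (X ^ 5 + X + C a⁻¹ : k[X]) = (X + C z) * g}
      = 2 ^ (m - 1) - 1 := by
  classical
  let F : {x : k | ¬ IsAS x ∧ x ≠ 1} → {a : k | a ≠ 0 ∧ ∃ z : k, ∃ g : k[X],
      g.Monic ∧ g.degree = 4 ∧ Irreducible g ∧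
      (X ^ 5 + X + C a⁻¹ : k[X]) = (X + C z) * g} := fun l => ⟨aOf l.1, by
    obtain ⟨hnas, hne1⟩ := l.2
    obtain ⟨ha0, hz0, hz1, hlam, hainv, hirr, hfac⟩ := aOf_spec hm hq hnas hne1
    exact ⟨ha0, zOf l.1, gzz _, gzz_monic _, gzz_degree _, hirr, hfac⟩⟩
  have hbij : Function.Bijective F := by
    constructor
    · rintro ⟨l1, h1⟩ ⟨l2, h2⟩ h
      have hval : aOf l1 = aOf l2 := congrArg Subtype.val h
      exact Subtype.ext (aOf_inj hm hq h1 h2 hval)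
    · rintro ⟨a, ha, hex⟩
      obtain ⟨l, hl, hal⟩ := aOf_surj hm hq ha hex
      exact ⟨⟨l, hl⟩, Subtype.ext hal⟩
  rw [← card_T hm hq (k := k)]
  exact (Nat.card_congr (Equiv.ofBijective F hbij)).symm
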